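/- Let μ be regular with (μ⁺)^{<μ} = μ⁺, θ ≥ μ⁺⁺, and M ≺ (H_θ, ∈, μ⁺) with M ∩ μ⁺ ∈ μ⁺ of cofinality μ and μ ⊆ M. Then for every (s,f) ∈ P(μ) ∩ M, the pair (s ∪ {M ∩ μ⁺}, f ∪ {(M ∩ μ⁺) ↦ {M ∩ μ⁺}}) is a condition in P(μ) extending (s,f). -/

import Mathlib

open FirstOrder

/-- The relation symbols of the language of set theory: a single binary
relation `∈`. -/
inductive memRel : ℕ → Type
  | mem : memRel 2

/-- The first-order language of set theory, with a single binary relation `∈`. -/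
def memLang : Language := ⟨fun _ => Empty, memRel⟩

/-- `ZFSet` (standing in for `(H_θ, ∈)`) as a structure in the language of set
theory, interpreting the relation symbol by genuine membership. -/
instance : memLang.Structure ZFSet where
  funMap := fun f _ => f.elim
  RelMap | .mem => fun x => x 0 ∈ x 1

/-- `x` is a (von Neumann) ordinal: a transitive set of transitive sets. -/
def IsOrd (x : ZFSet) : Prop := x.IsTransitive ∧ ∀ y ∈ x.toSet, y.IsTransitive

/-- The ordinal `β` has cofinality `δ`: it has a cofinal subset of size at most
`δ`, and every subset of size `< δ` is bounded in `β`. -/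
def cofEq (β : ZFSet) (δ : Cardinal.{0}) : Prop :=
  (∃ c : ZFSet, c.toSet ⊆ β.toSet ∧ Cardinal.mk c.toSet ≤ Cardinal.lift.{1} δ ∧
      ∀ x ∈ β.toSet, ∃ y ∈ c.toSet, x ∈ y ∨ x = y) ∧
  (∀ c : ZFSet, c.toSet ⊆ β.toSet → Cardinal.mk c.toSet < Cardinal.lift.{1} δ →
      ∃ z ∈ β.toSet, ∀ y ∈ c.toSet, y ∈ z)

/-- `(s, f)` is (a code for) a condition in the club-adding poset `P(μ)`, where
`mz`, `mp` are the von Neumann ordinals `μ`, `μ⁺`: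
`s ⊆ μ⁺ \ μ` of size `< μ`, `f` a function on `s` whose values are subsets of
`μ⁺ \ μ` of size `< μ`, with `f(ξ) ⊆ ξ'` whenever `ξ ∈ ξ'` are both in `s`. -/
def IsCondZ (μc : Cardinal.{0}) (mz mp s f : ZFSet) : Prop :=
  s.toSet ⊆ mp.toSet \ mz.toSet ∧
  Cardinal.mk s.toSet < Cardinal.lift.{1} μc ∧
  ZFSet.IsFunc s (ZFSet.powerset mp) f ∧
  (∀ ξ y : ZFSet, ξ ∈ s → ZFSet.pair ξ y ∈ f →
    y.toSet ⊆ mp.toSet \ mz.toSet ∧ Cardinal.mk y.toSet < Cardinal.lift.{1} μc) ∧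
  (∀ ξ ξ' y : ZFSet, ξ ∈ s → ξ' ∈ s → ξ ∈ ξ' → ZFSet.pair ξ y ∈ f →
    y.toSet ⊆ ξ'.toSet)

/-- The condition `(s, f)` extends the condition `(t, g)`. -/
def CondLeZ (s f t g : ZFSet) : Prop :=
  t.toSet ⊆ s.toSet ∧
  ∀ ξ y y' : ZFSet, ξ ∈ t → ZFSet.pair ξ y ∈ g → ZFSet.pair ξ y' ∈ f →
    y.toSet ⊆ y'.toSet

theorem ZFSet.mem_toSet (a u : ZFSet) : a ∈ u.toSet ↔ a ∈ u := Iff.rfl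

namespace Stmt12Aux
open Language BoundedFormula

/-- membership atomic formula -/
def memF {α : Type} {n : ℕ} (t u : memLang.Term (α ⊕ Fin n)) : memLang.BoundedFormula α n :=
  Relations.boundedFormula₂ memRel.mem t u

@[simp] lemma realize_memF {α : Type} {n : ℕ} (t u : memLang.Term (α ⊕ Fin n))
    (v : α → ZFSet) (xs : Fin n → ZFSet) :
    (memF t u).Realize v xs ↔ t.realize (Sum.elim v xs) ∈ u.realize (Sum.elim v xs) := by
  simp [memF, Structure.RelMap]
  exact BoundedFormula.realize_rel₂

/-- lift a term to a bigger bound-variable context -/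
def tlift {α : Type} {n m : ℕ} (h : n ≤ m) (t : memLang.Term (α ⊕ Fin n)) :
    memLang.Term (α ⊕ Fin m) :=
  t.relabel (Sum.map id (Fin.castLE h))

@[simp] lemma realize_tlift {α : Type} {n m : ℕ} (h : n ≤ m) (t : memLang.Term (α ⊕ Fin n))
    (v : α → ZFSet) (xs : Fin m → ZFSet) :
    (tlift h t).realize (Sum.elim v xs) = t.realize (Sum.elim v (xs ∘ Fin.castLE h)) := by
  simp [tlift, Term.realize_relabel]
  congr 1
  funext i
  cases i <;> rfl

@[simp] lemma snoc_castLE3 {β : Sort*} {n : ℕ} (xs : Fin (n+2) → β) (c : β) (h : n ≤ n+3) :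
    (Fin.snoc xs c : Fin (n+3) → β) ∘ Fin.castLE h = xs ∘ Fin.castLE (by omega : n ≤ n+2) := by
  funext i
  have hi : (i : ℕ) < n + 2 := by omega
  simp [Fin.snoc, Fin.castLE, hi]

@[simp] lemma snoc_castLE2 {β : Sort*} {n : ℕ} (xs : Fin (n+1) → β) (c : β) (h : n ≤ n+2) :
    (Fin.snoc xs c : Fin (n+2) → β) ∘ Fin.castLE h = xs ∘ Fin.castLE (by omega : n ≤ n+1) := by
  funext i
  have hi : (i : ℕ) < n + 1 := by omega
  simp [Fin.snoc, Fin.castLE, hi]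

@[simp] lemma snoc_castLE1 {β : Sort*} {n : ℕ} (xs : Fin n → β) (c : β) (h : n ≤ n+1) :
    (Fin.snoc xs c : Fin (n+1) → β) ∘ Fin.castLE h = xs := by
  funext i
  have hi : (i : ℕ) < n := i.isLt
  simp [Fin.snoc, Fin.castLE, hi]

/-- `pair a b ∈ g`, as a first-order formula. -/
def pairMemF {α : Type} {n : ℕ} (a b g : memLang.Term (α ⊕ Fin n)) :
    memLang.BoundedFormula α n :=
  let a3 : memLang.Term (α ⊕ Fin (n+3)) := tlift (by omega) a
  let b3 : memLang.Term (α ⊕ Fin (n+3)) := tlift (by omega) b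
  let g1 : memLang.Term (α ⊕ Fin (n+1)) := tlift (by omega) g
  let p1 : memLang.Term (α ⊕ Fin (n+1)) := .var (.inr ⟨n, by omega⟩)
  let p2 : memLang.Term (α ⊕ Fin (n+2)) := .var (.inr ⟨n, by omega⟩)
  let q2 : memLang.Term (α ⊕ Fin (n+2)) := .var (.inr ⟨n+1, by omega⟩)
  let q3 : memLang.Term (α ⊕ Fin (n+3)) := .var (.inr ⟨n+1, by omega⟩)
  let r3 : memLang.Term (α ⊕ Fin (n+3)) := .var (.inr ⟨n+2, by omega⟩)
  ((memF p1 g1) ⊓ (((memF q2 p2).iff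
      ((((memF r3 q3).iff (Term.bdEqual r3 a3)).all) ⊔
       (((memF r3 q3).iff ((Term.bdEqual r3 a3) ⊔ (Term.bdEqual r3 b3))).all))).all)).ex

lemma zfset_pair_mem (av bv gv : ZFSet) :
    (∃ p, p ∈ gv ∧ ∀ q, (q ∈ p ↔ ((∀ r, r ∈ q ↔ r = av) ∨ (∀ r, r ∈ q ↔ (r = av ∨ r = bv))))) ↔
      ZFSet.pair av bv ∈ gv := by
  have hs : ∀ q : ZFSet, (∀ r, r ∈ q ↔ r = av) ↔ q = ({av} : ZFSet) := by
    intro q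
    rw [ZFSet.ext_iff]
    simp [ZFSet.mem_singleton]
  have hd : ∀ q : ZFSet, (∀ r, r ∈ q ↔ (r = av ∨ r = bv)) ↔ q = ({av, bv} : ZFSet) := by
    intro q
    rw [ZFSet.ext_iff]
    simp [ZFSet.mem_insert_iff, ZFSet.mem_singleton]
  have hp : ∀ p : ZFSet, (∀ q, q ∈ p ↔ (q = ({av} : ZFSet) ∨ q = ({av, bv} : ZFSet)))
      ↔ p = ZFSet.pair av bv := by
    intro p
    rw [ZFSet.ext_iff]
    unfold ZFSet.pair
    simp [ZFSet.mem_insert_iff, ZFSet.mem_singleton]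
  constructor
  · rintro ⟨p, hpg, hq⟩
    have : p = ZFSet.pair av bv := by
      rw [← hp]
      intro q
      rw [hq q]
      rw [hs q, hd q]
    rwa [this] at hpg
  · intro h
    refine ⟨ZFSet.pair av bv, h, fun q => ?_⟩
    rw [hs q, hd q]
    exact ((hp _).mpr rfl) q

@[simp] lemma realize_pairMemF {α : Type} {n : ℕ} (a b g : memLang.Term (α ⊕ Fin n))
    (v : α → ZFSet) (xs : Fin n → ZFSet) :
    (pairMemF a b g).Realize v xs ↔
      ZFSet.pair (a.realize (Sum.elim v xs)) (b.realize (Sum.elim v xs))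
        ∈ g.realize (Sum.elim v xs) := by
  rw [← zfset_pair_mem]
  simp [pairMemF, Term.realize, Fin.snoc, Fin.castLE]

/-- the formula (in free variables x = 0, w = 1) stating: there are `g`, `m`
with `m ∈ w`, `g` relating every element of `x` to some element of `m`,
injectively. -/
def injF : memLang.BoundedFormula (Fin 2) 2 :=
  let c1 : memLang.BoundedFormula (Fin 2) 2 :=
    memF (.var (.inr ⟨1, by omega⟩)) (.var (.inl 1))
  let c2 : memLang.BoundedFormula (Fin 2) 2 :=
    ((memF (.var (.inr ⟨2, by omega⟩)) (.var (.inl 0))).imp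
      (((memF (.var (.inr ⟨3, by omega⟩)) (.var (.inr ⟨1, by omega⟩))) ⊓
        (pairMemF (.var (.inr ⟨2, by omega⟩)) (.var (.inr ⟨3, by omega⟩))
          (.var (.inr ⟨0, by omega⟩)))).ex)).all
  let c3 : memLang.BoundedFormula (Fin 2) 2 :=
    ((((memF (.var (.inr ⟨2, by omega⟩)) (.var (.inl 0))).imp
      ((memF (.var (.inr ⟨3, by omega⟩)) (.var (.inl 0))).imp
      ((pairMemF (.var (.inr ⟨2, by omega⟩)) (.var (.inr ⟨4, by omega⟩))
          (.var (.inr ⟨0, by omega⟩))).imp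
      ((pairMemF (.var (.inr ⟨3, by omega⟩)) (.var (.inr ⟨4, by omega⟩))
          (.var (.inr ⟨0, by omega⟩))).imp
        (Term.bdEqual (.var (.inr ⟨2, by omega⟩)) (.var (.inr ⟨3, by omega⟩))))))).all).all).all
  c1 ⊓ c2 ⊓ c3

lemma realize_injF (v : Fin 2 → ZFSet) (xs : Fin 2 → ZFSet) :
    injF.Realize v xs ↔
      (xs 1 ∈ v 1 ∧
       (∀ a, a ∈ v 0 → ∃ b, b ∈ xs 1 ∧ ZFSet.pair a b ∈ xs 0) ∧
       (∀ a a' b, a ∈ v 0 → a' ∈ v 0 → ZFSet.pair a b ∈ xs 0 → ZFSet.pair a' b ∈ xs 0 →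
          a = a')) := by
  simp +decide [injF, Term.realize, Fin.snoc, Fin.castLE, Fin.castPred_zero, and_assoc]

/-- formula in free vars x = 0, b = 1, g = 2: ∃ a (a ∈ x ∧ pair a b ∈ g) -/
def recF : memLang.BoundedFormula (Fin 3) 1 :=
  (memF (.var (.inr ⟨0, by omega⟩)) (.var (.inl 0))) ⊓
  pairMemF (.var (.inr ⟨0, by omega⟩)) (.var (.inl 1)) (.var (.inl 2))

lemma realize_recF (v : Fin 3 → ZFSet) (xs : Fin 1 → ZFSet) :
    recF.Realize v xs ↔ (xs 0 ∈ v 0 ∧ ZFSet.pair (xs 0) (v 1) ∈ v 2) := by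
  simp [recF, Term.realize]

/-- formula in free vars ξ = 0, f = 1: ∃ y (pair ξ y ∈ f) -/
def valF : memLang.BoundedFormula (Fin 2) 1 :=
  pairMemF (.var (.inl 0)) (.var (.inr ⟨0, by omega⟩)) (.var (.inl 1))

lemma realize_valF (v : Fin 2 → ZFSet) (xs : Fin 1 → ZFSet) :
    valF.Realize v xs ↔ ZFSet.pair (v 0) (xs 0) ∈ v 1 := by
  simp [valF, Term.realize]

/-- Elementarity: if a tuple of parameters from M satisfies an existential
statement in V, then there are witnesses inside M. -/
lemma transfer_exs (M : memLang.ElementarySubstructure ZFSet) {k n : ℕ}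
    (φ : memLang.BoundedFormula (Fin k) n) (v : Fin k → ZFSet) (hv : ∀ i, v i ∈ M)
    (h : ∃ xs : Fin n → ZFSet, φ.Realize v xs) :
    ∃ xs : Fin n → ZFSet, (∀ i, xs i ∈ M) ∧ φ.Realize v xs := by
  let v' : Fin k → M := fun i => ⟨v i, hv i⟩
  have h1 : (φ.exs).Realize v := BoundedFormula.realize_exs.2 h
  have h2 : (φ.exs).Realize v' := (M.subtype.map_formula φ.exs v').mp h1
  obtain ⟨xs', h3⟩ := BoundedFormula.realize_exs.1 h2
  have h4 : φ.toFormula.Realize (Sum.elim v' xs') := by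
    rw [BoundedFormula.realize_toFormula]
    exact h3
  have h5 : φ.toFormula.Realize (((↑) : M → ZFSet) ∘ Sum.elim v' xs') :=
    (M.subtype.map_formula φ.toFormula (Sum.elim v' xs')).mpr h4
  have h6 : φ.toFormula.Realize (Sum.elim v (((↑) : M → ZFSet) ∘ xs')) := by
    have : (((↑) : M → ZFSet) ∘ Sum.elim v' xs') = Sum.elim v (((↑) : M → ZFSet) ∘ xs') := by
      funext i
      cases i <;> rfl
    rwa [this] at h5
  rw [BoundedFormula.realize_toFormula] at h6
  exact ⟨((↑) : M → ZFSet) ∘ xs', fun i => (xs' i).2, h6⟩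

end Stmt12Aux

namespace Stmt12Aux
open Language

/-- Key elementarity lemma: any member of `M` of size `< μ` is a subset of `M`. -/
lemma keyL (M : memLang.ElementarySubstructure ZFSet) (mz mp γ : ZFSet)
    (hmzmp : mz ∈ mp) (hγtrans : γ.IsTransitive)
    (hmpM : mp ∈ M) (hγeq : (M : Set ZFSet) ∩ mp.toSet = γ.toSet)
    (μc : Cardinal.{0}) (hmzc : Cardinal.mk mz.toSet = Cardinal.lift.{1} μc)
    (x : ZFSet) (hxM : x ∈ M) (hxc : Cardinal.mk x.toSet < Cardinal.lift.{1} μc) :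
    x.toSet ⊆ (M : Set ZFSet) := by
  classical
  obtain ⟨ι⟩ := (Cardinal.le_def _ _).1 (hxc.trans_eq hmzc.symm).le
  let F : ZFSet → ZFSet := fun z =>
    if h : z ∈ x then ((ι ⟨z, (ZFSet.mem_toSet _ _).2 h⟩ : mz.toSet) : ZFSet) else ∅
  have hFmem : ∀ z ∈ x, F z ∈ mz := by
    intro z hz
    simp only [F, dif_pos hz]
    exact (ZFSet.mem_toSet _ _).1 (ι ⟨z, (ZFSet.mem_toSet _ _).2 hz⟩).2
  letI : ZFSet.Definable₁ F := Classical.allZFSetDefinable _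
  set g := ZFSet.map F x with hgdef
  have hg : ∀ a b : ZFSet, ZFSet.pair a b ∈ g ↔ a ∈ x ∧ F a = b := by
    intro a b
    constructor
    · intro h
      obtain ⟨z, hz, he⟩ := ZFSet.mem_map.1 h
      obtain ⟨h1, h2⟩ := ZFSet.pair_injective he
      exact ⟨h1 ▸ hz, h1 ▸ h2⟩
    · rintro ⟨ha, hb⟩
      exact ZFSet.mem_map.2 ⟨a, ha, by rw [hb]⟩
  have hinj : ∀ a a' b : ZFSet, a ∈ x → a' ∈ x →
      ZFSet.pair a b ∈ g → ZFSet.pair a' b ∈ g → a = a' := by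
    intro a a' b ha ha' h h'
    have e1 := ((hg a b).1 h).2
    have e2 := ((hg a' b).1 h').2
    have he : F a = F a' := e1.trans e2.symm
    simp only [F, dif_pos ha, dif_pos ha'] at he
    have := ι.injective (Subtype.ext he)
    exact Subtype.ext_iff.1 this
  have hV : ∃ xs : Fin 2 → ZFSet, injF.Realize ![x, mp] xs := by
    refine ⟨![g, mz], (realize_injF _ _).2 ?_⟩
    simp only [Matrix.cons_val_zero, Matrix.cons_val_one, Matrix.head_cons]
    refine ⟨hmzmp, ?_, ?_⟩
    · intro a ha
      exact ⟨F a, hFmem a ha, (hg a (F a)).2 ⟨ha, rfl⟩⟩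
    · exact hinj
  obtain ⟨xs, hxsM, hreal⟩ := transfer_exs M injF ![x, mp]
    (fun i => by fin_cases i <;> simpa) hV
  rw [realize_injF] at hreal
  simp only [Matrix.cons_val_zero, Matrix.cons_val_one, Matrix.head_cons] at hreal
  obtain ⟨hm_mp, hab, hinj'⟩ := hreal
  have hm'γ : xs 1 ∈ γ.toSet := by
    rw [← hγeq]
    exact ⟨hxsM 1, (ZFSet.mem_toSet _ _).2 hm_mp⟩
  have hm'sub : (xs 1).toSet ⊆ (M : Set ZFSet) := by
    intro z hz
    have hzγ : z ∈ γ.toSet := (ZFSet.mem_toSet _ _).2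
      (hγtrans (xs 1) ((ZFSet.mem_toSet _ _).1 hm'γ) ((ZFSet.mem_toSet _ _).1 hz))
    rw [← hγeq] at hzγ
    exact hzγ.1
  intro ξ hξ
  have hξx : ξ ∈ x := (ZFSet.mem_toSet _ _).1 hξ
  obtain ⟨b, hbm, hbg⟩ := hab ξ hξx
  have hbM : b ∈ M := hm'sub ((ZFSet.mem_toSet _ _).2 hbm)
  have hV2 : ∃ xs2 : Fin 1 → ZFSet, recF.Realize ![x, b, xs 0] xs2 := by
    refine ⟨![ξ], (realize_recF _ _).2 ?_⟩
    simp only [Matrix.cons_val_zero, Matrix.cons_val_one, Matrix.head_cons]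
    exact ⟨hξx, hbg⟩
  obtain ⟨xs2, hxs2M, hr2⟩ := transfer_exs M recF ![x, b, xs 0]
    (fun i => by fin_cases i <;> simp [hxM, hbM, hxsM 0]) hV2
  rw [realize_recF] at hr2
  simp only [Matrix.cons_val_zero, Matrix.cons_val_one, Matrix.head_cons] at hr2
  obtain ⟨hax, hpg⟩ := hr2
  have heq : xs2 0 = ξ := hinj' _ _ _ hax hξx hpg hbg
  have := hxs2M 0
  rwa [heq] at this

/-- If `ξ, f ∈ M` and `y` is the unique set with `pair ξ y ∈ f`, then `y ∈ M`. -/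
lemma valM (M : memLang.ElementarySubstructure ZFSet) (ξ f y : ZFSet)
    (hξM : ξ ∈ M) (hfM : f ∈ M) (hy : ZFSet.pair ξ y ∈ f)
    (huniq : ∀ y', ZFSet.pair ξ y' ∈ f → y' = y) : y ∈ M := by
  have hV : ∃ xs : Fin 1 → ZFSet, valF.Realize ![ξ, f] xs := by
    refine ⟨![y], (realize_valF _ _).2 ?_⟩
    simpa using hy
  obtain ⟨xs, hxsM, hr⟩ := transfer_exs M valF ![ξ, f]
    (fun i => by fin_cases i <;> simpa) hV
  rw [realize_valF] at hr
  simp only [Matrix.cons_val_zero, Matrix.cons_val_one, Matrix.head_cons] at hr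
  have := huniq (xs 0) hr
  rw [← this]
  exact hxsM 0

end Stmt12Aux

/-- Let `μ` be regular with `(μ⁺)^{<μ} = μ⁺` and `M ≺ (H_θ, ∈, μ⁺)` with
`M ∩ μ⁺ ∈ μ⁺` of cofinality `μ` and `μ ⊆ M`.  Then for every condition
`(s,f) ∈ P(μ) ∩ M`, the pair `(s ∪ {M ∩ μ⁺}, f ∪ {(M ∩ μ⁺) ↦ {M ∩ μ⁺}})` is a
condition in `P(μ)` extending `(s,f)`. -/
theorem stmt12 (μc : Cardinal.{0}) (hμ : μc.IsRegular)
    (hpow : (Order.succ μc) ^< μc = Order.succ μc)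
    (mz mp : ZFSet) (hmz : IsOrd mz) (hmp : IsOrd mp) (hmzmp : mz ∈ mp)
    (hmzc : Cardinal.mk mz.toSet = Cardinal.lift.{1} μc)
    (hmpc : Cardinal.mk mp.toSet = Cardinal.lift.{1} (Order.succ μc))
    (M : memLang.ElementarySubstructure ZFSet)
    (hmpM : mp ∈ M)
    (γ : ZFSet) (hγ : γ ∈ mp) (hγeq : (M : Set ZFSet) ∩ mp.toSet = γ.toSet)
    (hγcof : cofEq γ μc)
    (hμM : mz.toSet ⊆ (M : Set ZFSet))
    (s f : ZFSet) (hcond : IsCondZ μc mz mp s f)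
    (hsM : s ∈ M) (hfM : f ∈ M) :
    IsCondZ μc mz mp (insert γ s) (f ∪ {ZFSet.pair γ {γ}}) ∧
    CondLeZ (insert γ s) (f ∪ {ZFSet.pair γ {γ}}) s f := by

  obtain ⟨h1, h2, h3, h4, h5⟩ := hcond
  have hγtrans : γ.IsTransitive := hmp.2 γ ((ZFSet.mem_toSet _ _).2 hγ)
  have hγM : γ.toSet ⊆ (M : Set ZFSet) := by
    intro z hz
    rw [← hγeq] at hz
    exact hz.1
  -- γ ∉ mz
  have hmzγ : mz.toSet ⊆ γ.toSet := by
    intro z hz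
    rw [← hγeq]
    exact ⟨hμM hz, (ZFSet.mem_toSet _ _).2 ((hmp.1 mz hmzmp) ((ZFSet.mem_toSet _ _).1 hz))⟩
  have hγnmz : γ ∉ mz := by
    intro h
    exact ZFSet.mem_irrefl γ ((ZFSet.mem_toSet _ _).1 (hmzγ ((ZFSet.mem_toSet _ _).2 h)))
  -- s ⊆ M, hence s ⊆ γ
  have hsγ : ∀ ξ ∈ s, ξ ∈ γ := by
    intro ξ hξ
    have hξM : ξ ∈ (M : Set ZFSet) :=
      Stmt12Aux.keyL M mz mp γ hmzmp hγtrans hmpM hγeq μc hmzc s hsM h2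
        ((ZFSet.mem_toSet _ _).2 hξ)
    have : ξ ∈ γ.toSet := by
      rw [← hγeq]
      exact ⟨hξM, (ZFSet.mem_toSet _ _).2 (h1 ((ZFSet.mem_toSet _ _).2 hξ)).1⟩
    exact (ZFSet.mem_toSet _ _).1 this
  have hγns : γ ∉ s := fun h => ZFSet.mem_irrefl γ (hsγ γ h)
  -- ξ ∈ s for any pair in f
  have hfst : ∀ ξ y : ZFSet, ZFSet.pair ξ y ∈ f → ξ ∈ s ∧ y ∈ ZFSet.powerset mp :=
    fun ξ y h => ZFSet.pair_mem_prod.1 (h3.1 h)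
  -- values of f are subsets of γ
  have hfvalγ : ∀ ξ y : ZFSet, ZFSet.pair ξ y ∈ f → y.toSet ⊆ γ.toSet := by
    intro ξ y hpair
    have hξs : ξ ∈ s := (hfst ξ y hpair).1
    have hξM : ξ ∈ M :=
      Stmt12Aux.keyL M mz mp γ hmzmp hγtrans hmpM hγeq μc hmzc s hsM h2
        ((ZFSet.mem_toSet _ _).2 hξs)
    obtain ⟨w, hw, huniq⟩ := h3.2 ξ hξs
    have hyw : y = w := huniq y hpair
    have hyM : y ∈ M := Stmt12Aux.valM M ξ f y hξM hfM hpair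
      (fun y' h' => (huniq y' h').trans hyw.symm)
    have hysub : y.toSet ⊆ (M : Set ZFSet) :=
      Stmt12Aux.keyL M mz mp γ hmzmp hγtrans hmpM hγeq μc hmzc y hyM (h4 ξ y hξs hpair).2
    intro z hz
    rw [← hγeq]
    exact ⟨hysub hz, Set.diff_subset ((h4 ξ y hξs hpair).1 hz)⟩
  -- basic membership facts
  have hmemU : ∀ z : ZFSet, z ∈ f ∪ {ZFSet.pair γ {γ}} ↔
      z ∈ f ∨ z = ZFSet.pair γ {γ} := by
    intro z
    rw [ZFSet.mem_union, ZFSet.mem_singleton]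
  have haleph : (Cardinal.aleph0 : Cardinal.{1}) ≤ Cardinal.lift.{1} μc := by
    rw [Cardinal.aleph0_le_lift]
    exact hμ.aleph0_le
  have htoSet : (insert γ s).toSet = insert γ s.toSet := by
    ext z
    simp [ZFSet.mem_toSet, ZFSet.mem_insert_iff, Set.mem_insert_iff]
  have hsingtoSet : ({γ} : ZFSet).toSet = ({γ} : Set ZFSet) := by
    ext z
    simp [ZFSet.mem_toSet, ZFSet.mem_singleton]
  refine ⟨⟨?_, ?_, ⟨?_, ?_⟩, ?_, ?_⟩, ?_, ?_⟩
  · -- (insert γ s).toSet ⊆ mp.toSet \ mz.toSet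
    intro z hz
    have := (ZFSet.mem_toSet _ _).1 hz
    rcases ZFSet.mem_insert_iff.1 this with rfl | hzs
    · exact ⟨(ZFSet.mem_toSet _ _).2 hγ, fun hc => hγnmz ((ZFSet.mem_toSet _ _).1 hc)⟩
    · exact h1 ((ZFSet.mem_toSet _ _).2 hzs)
  · -- cardinality
    rw [htoSet]
    calc Cardinal.mk (insert γ s.toSet : Set ZFSet) ≤ Cardinal.mk s.toSet + 1 :=
          Cardinal.mk_insert_le
    _ < Cardinal.lift.{1} μc :=
          Cardinal.add_lt_of_lt haleph h2 (Cardinal.one_lt_aleph0.trans_le haleph)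
  · -- f ∪ {pair γ {γ}} ⊆ prod (insert γ s) (powerset mp)
    intro z hz
    rcases (hmemU z).1 hz with hzf | rfl
    · obtain ⟨a, ha, b, hb, rfl⟩ := ZFSet.mem_prod.1 (h3.1 hzf)
      exact ZFSet.pair_mem_prod.2 ⟨ZFSet.mem_insert_iff.2 (Or.inr ha), hb⟩
    · refine ZFSet.pair_mem_prod.2 ⟨ZFSet.mem_insert γ s, ZFSet.mem_powerset.2 ?_⟩
      intro w hw
      rw [ZFSet.mem_singleton.1 hw]
      exact hγ
  · -- functionality
    intro z hz
    rcases ZFSet.mem_insert_iff.1 hz with rfl | hzs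
    · refine ⟨{z}, (hmemU _).2 (Or.inr rfl), ?_⟩
      intro w hw
      rcases (hmemU _).1 hw with hwf | hweq
      · exact absurd (hfst z w hwf).1 hγns
      · exact (ZFSet.pair_inj.1 hweq).2
    · obtain ⟨w, hw, huniq⟩ := h3.2 z hzs
      refine ⟨w, (hmemU _).2 (Or.inl hw), ?_⟩
      intro w' hw'
      rcases (hmemU _).1 hw' with hwf | hweq
      · exact huniq w' hwf
      · exact absurd ((ZFSet.pair_inj.1 hweq).1 ▸ hzs) hγns
  · -- values are small subsets of mp \ mz
    intro ξ y hξ hpair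
    rcases (hmemU _).1 hpair with hpf | hpeq
    · exact h4 ξ y (hfst ξ y hpf).1 hpf
    · obtain ⟨rfl, rfl⟩ := ZFSet.pair_inj.1 hpeq
      constructor
      · intro z hz
        rw [hsingtoSet] at hz
        rcases hz with rfl
        exact ⟨(ZFSet.mem_toSet _ _).2 hγ, fun hc => hγnmz ((ZFSet.mem_toSet _ _).1 hc)⟩
      · rw [hsingtoSet, Cardinal.mk_singleton]
        exact Cardinal.one_lt_aleph0.trans_le haleph
  · -- coherence
    intro ξ ξ' y hξ hξ' hξξ' hpair
    rcases (hmemU _).1 hpair with hpf | hpeq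
    · have hξs : ξ ∈ s := (hfst ξ y hpf).1
      rcases ZFSet.mem_insert_iff.1 hξ' with rfl | hξ's
      · exact hfvalγ ξ y hpf
      · exact h5 ξ ξ' y hξs hξ's hξξ' hpf
    · obtain ⟨rfl, rfl⟩ := ZFSet.pair_inj.1 hpeq
      exfalso
      rcases ZFSet.mem_insert_iff.1 hξ' with rfl | hξ's
      · exact ZFSet.mem_irrefl _ hξξ'
      · exact ZFSet.mem_asymm hξξ' (hsγ ξ' hξ's)
  · -- s ⊆ insert γ s
    intro z hz
    rw [htoSet]
    exact Set.mem_insert_of_mem _ hz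
  · -- compatibility of the functions
    intro ξ y y' hξ hy hy'
    rcases (hmemU _).1 hy' with hpf | hpeq
    · obtain ⟨w, hw, huniq⟩ := h3.2 ξ hξ
      rw [(huniq y hy).trans (huniq y' hpf).symm]
    · exact absurd ((ZFSet.pair_inj.1 hpeq).1 ▸ hξ) hγns
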